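/- Let m ≥ 2, n ≥ 1 and let π_crit = min_{r ∈ (0,1]} Π(r) where Π(r) = (1 - (1 - r^{1/m})^{1/n}) / r. Then for every π < π_crit, the only fixed point of F(r) = (1 - (1 - π·r)^n)^m in [0,1] is r = 0. -/

import Mathlib

/-- Below the critical culture strength `π_crit = min_{r ∈ (0,1]} Π(r)`,
the only fixed point of `F(r) = (1 - (1 - π r)^n)^m` in `[0,1]` is `r = 0`. -/
theorem stmt_5 (m n : ℕ) (hm : 2 ≤ m) (hn : 1 ≤ n) (rc : ℝ) (hrc : rc ∈ Set.Ioc (0:ℝ) 1)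
    (hmin : ∀ r ∈ Set.Ioc (0:ℝ) 1,
      (1 - (1 - rc ^ (1 / (m:ℝ))) ^ (1 / (n:ℝ))) / rc ≤
      (1 - (1 - r ^ (1 / (m:ℝ))) ^ (1 / (n:ℝ))) / r)
    (π : ℝ) (hπ0 : 0 < π)
    (hπ : π < (1 - (1 - rc ^ (1 / (m:ℝ))) ^ (1 / (n:ℝ))) / rc) :
    ∀ r ∈ Set.Icc (0:ℝ) 1, (1 - (1 - π * r) ^ n) ^ m = r → r = 0 := by
  intro r hr hfix
  by_contra hr0
  have hrpos : 0 < r := lt_of_le_of_ne hr.1 (Ne.symm hr0)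
  have hr1 : r ≤ 1 := hr.2
  have hm0 : m ≠ 0 := by omega
  have hn0 : n ≠ 0 := by omega
  have hnR : (0:ℝ) < n := by exact_mod_cast Nat.pos_of_ne_zero hn0
  have h1 : (1 - (1 - rc ^ (1 / (m:ℝ))) ^ (1 / (n:ℝ))) / rc ≤ 1 := by
    have := hmin 1 ⟨one_pos, le_refl 1⟩
    simpa [Real.one_rpow, Real.zero_rpow (inv_ne_zero hnR.ne')] using this
  have hπ1 : π < 1 := lt_of_lt_of_le hπ h1
  have hπr : π * r < 1 := by nlinarith
  have hπr0 : 0 ≤ π * r := by positivity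
  have hx0 : 0 ≤ 1 - π * r := by linarith
  have hxn1 : (1 - π * r) ^ n ≤ 1 := pow_le_one₀ hx0 (by linarith)
  have hy0 : 0 ≤ 1 - (1 - π * r) ^ n := by linarith
  have hDm : r ^ ((1:ℝ) / (m:ℝ)) = 1 - (1 - π * r) ^ n := by
    have h := Real.pow_rpow_inv_natCast hy0 hm0
    rw [hfix] at h
    rw [one_div]
    exact h
  have hDn : (1 - r ^ ((1:ℝ) / (m:ℝ))) ^ ((1:ℝ) / (n:ℝ)) = 1 - π * r := by
    rw [hDm]
    have h : (1:ℝ) - (1 - (1 - π * r) ^ n) = (1 - π * r) ^ n := by ring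
    rw [h, one_div]
    exact Real.pow_rpow_inv_natCast hx0 hn0
  have hPr : (1 - (1 - r ^ (1 / (m:ℝ))) ^ (1 / (n:ℝ))) / r = π := by
    rw [hDn]
    field_simp
    ring
  have h2 := hmin r ⟨hrpos, hr1⟩
  rw [hPr] at h2
  linarith
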